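/- In any inverse semigroup S, the natural conjugacy ∼ₙ coincides with i-conjugacy ∼ᵢ, where a ∼ᵢ b iff there exists g ∈ S¹ with g⁻¹ag = b and gbg⁻¹ = a. -/

import Mathlib

/-- Natural conjugacy. -/
def NatConj {S : Type*} [Semigroup S] (a b : S) : Prop :=
  ∃ g h : WithOne S,
    (a : WithOne S) * g = g * (b : WithOne S) ∧
    (b : WithOne S) * h = h * (a : WithOne S) ∧
    h * (a : WithOne S) * g = (b : WithOne S) ∧
    g * (b : WithOne S) * h = (a : WithOne S)

open Classical in
/-- The extension of the inverse operation of `S` to `S¹ = WithOne S`, with `1⁻¹ = 1`. -/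
noncomputable def winv {S : Type*} [Semigroup S] [Inv S] (x : WithOne S) : WithOne S :=
  if h : x = 1 then 1 else ((WithOne.unone h)⁻¹ : S)

namespace ConjAux

variable {M : Type*} [Monoid M] (ι : M → M)
  (m1 : ∀ x : M, x * ι x * x = x)
  (m2 : ∀ x : M, ι x * x * ι x = ι x)
  (mu : ∀ x y : M, x * y * x = x → y * x * y = y → y = ι x)

set_option linter.unusedSectionVars false

include m1 m2 mu

theorem i_i (x : M) : ι (ι x) = x :=
  (mu (ι x) x (m2 x) (m1 x)).symm

theorem idem_i (e : M) (he : e * e = e) : ι e = e :=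
  (mu e e (by rw [he, he]) (by rw [he, he])).symm

theorem idem_mul (e f : M) (he : e * e = e) (hf : f * f = f) :
    (e * f) * (e * f) = e * f := by
  have h1 : (e * f) * ι (e * f) * (e * f) = e * f := m1 _
  have h2 : ι (e * f) * (e * f) * ι (e * f) = ι (e * f) := m2 _
  have key : f * ι (e * f) * e = ι (e * f) := by
    apply mu
    · calc e * f * (f * ι (e * f) * e) * (e * f)
          = e * (f * f) * ι (e * f) * (e * e) * f := by simp only [mul_assoc]
        _ = e * f * ι (e * f) * (e * f) := by rw [he, hf]; simp only [mul_assoc]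
        _ = e * f := h1
    · calc f * ι (e * f) * e * (e * f) * (f * ι (e * f) * e)
          = f * (ι (e * f) * (e * e) * (f * f) * ι (e * f)) * e := by
            simp only [mul_assoc]
        _ = f * (ι (e * f) * (e * f) * ι (e * f)) * e := by
            rw [he, hf]; try simp only [mul_assoc]
        _ = f * ι (e * f) * e := by rw [h2]
  have hxi : ι (e * f) * ι (e * f) = ι (e * f) := by
    conv_lhs => rw [← key]
    calc f * ι (e * f) * e * (f * ι (e * f) * e)
        = f * (ι (e * f) * (e * f) * ι (e * f)) * e := by simp only [mul_assoc]
      _ = f * ι (e * f) * e := by rw [h2]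
      _ = ι (e * f) := key
  have hef : e * f = ι (e * f) :=
    (i_i ι m1 m2 mu (e * f)).symm.trans (idem_i ι m1 m2 mu _ hxi)
  rw [hef]; exact hxi

theorem idem_comm (e f : M) (he : e * e = e) (hf : f * f = f) :
    e * f = f * e := by
  have hef := idem_mul ι m1 m2 mu e f he hf
  have hfe := idem_mul ι m1 m2 mu f e hf he
  have : f * e = ι (e * f) := by
    apply mu
    · calc e * f * (f * e) * (e * f)
          = e * (f * f) * (e * e) * f := by simp only [mul_assoc]
        _ = (e * f) * (e * f) := by rw [he, hf]; simp only [mul_assoc]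
        _ = e * f := hef
    · calc f * e * (e * f) * (f * e)
          = f * (e * e) * (f * f) * e := by simp only [mul_assoc]
        _ = (f * e) * (f * e) := by rw [he, hf]; simp only [mul_assoc]
        _ = f * e := hfe
  rw [this, idem_i ι m1 m2 mu _ hef]

theorem i_mul (x y : M) : ι (x * y) = ι y * ι x := by
  have hxx : ι x * x * (ι x * x) = ι x * x := by
    calc ι x * x * (ι x * x) = ι x * (x * ι x * x) := by simp only [mul_assoc]
      _ = ι x * x := by rw [m1]
  have hyy : y * ι y * (y * ι y) = y * ι y := by
    calc y * ι y * (y * ι y) = y * ι y * y * ι y := by simp only [mul_assoc]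
      _ = y * ι y := by rw [m1]
  symm; apply mu
  · calc x * y * (ι y * ι x) * (x * y)
        = x * (y * ι y * (ι x * x)) * y := by simp only [mul_assoc]
      _ = x * (ι x * x * (y * ι y)) * y := by
          rw [idem_comm ι m1 m2 mu _ _ hyy hxx]
      _ = (x * ι x * x) * (y * ι y * y) := by simp only [mul_assoc]
      _ = x * y := by rw [m1, m1]
  · calc ι y * ι x * (x * y) * (ι y * ι x)
        = ι y * (ι x * x * (y * ι y)) * ι x := by simp only [mul_assoc]
      _ = ι y * (y * ι y * (ι x * x)) * ι x := by
          rw [idem_comm ι m1 m2 mu _ _ hxx hyy]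
      _ = (ι y * y * ι y) * (ι x * x * ι x) := by simp only [mul_assoc]
      _ = ι y * ι x := by rw [m2, m2]

/-- If `k` is idempotent and `v * k = k` then `k * v = k`. -/
theorem absorb_right (v k : M) (hk : k * k = k) (hvk : v * k = k) :
    k * v = k := by
  have hik : ι k = k := idem_i ι m1 m2 mu k hk
  have i1 : v * ι v * k = k := by
    calc v * ι v * k = v * ι v * (v * k) := by rw [hvk]
      _ = v * ι v * v * k := by simp only [mul_assoc]
      _ = v * k := by rw [m1]
      _ = k := hvk
  have i2 : k * ι v = k := by
    have := congrArg ι hvk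
    rw [i_mul ι m1 m2 mu, hik] at this
    exact this
  have hvv : ι v * v * (ι v * v) = ι v * v := by
    calc ι v * v * (ι v * v) = ι v * (v * ι v * v) := by simp only [mul_assoc]
      _ = ι v * v := by rw [m1]
  have i3 : k * v = ι v * k := by
    calc k * v = k * ι v * v := by rw [i2]
      _ = k * (ι v * v) := by rw [mul_assoc]
      _ = ι v * v * k := idem_comm ι m1 m2 mu _ _ hk hvv
      _ = ι v * (v * k) := by rw [mul_assoc]
      _ = ι v * k := by rw [hvk]
  calc k * v = v * (k * v) := by
        rw [← mul_assoc, hvk]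
    _ = v * (ι v * k) := by rw [i3]
    _ = v * ι v * k := by rw [mul_assoc]
    _ = k := i1

/-- If `j` is idempotent and `j * w = j` then `w * j = j`. -/
theorem absorb_left (w j : M) (hj : j * j = j) (hjw : j * w = j) :
    w * j = j := by
  have hij : ι j = j := idem_i ι m1 m2 mu j hj
  have i1 : j * ι w * w = j := by
    calc j * ι w * w = j * w * ι w * w := by rw [hjw]
      _ = j * (w * ι w * w) := by simp only [mul_assoc]
      _ = j * w := by rw [m1]
      _ = j := hjw
  have i2 : ι w * j = j := by
    have := congrArg ι hjw
    rw [i_mul ι m1 m2 mu, hij] at this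
    exact this
  have hww : w * ι w * (w * ι w) = w * ι w := by
    calc w * ι w * (w * ι w) = w * ι w * w * ι w := by simp only [mul_assoc]
      _ = w * ι w := by rw [m1]
  have i3 : w * j = j * ι w := by
    calc w * j = w * (ι w * j) := by rw [i2]
      _ = w * ι w * j := by rw [mul_assoc]
      _ = j * (w * ι w) := idem_comm ι m1 m2 mu _ _ hww hj
      _ = j * w * ι w := by rw [mul_assoc]
      _ = j * ι w := by rw [hjw]
  calc w * j = w * j * w := by
        rw [mul_assoc, hjw]
    _ = j * ι w * w := by rw [i3]
    _ = j := i1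

end ConjAux

/-- In an inverse semigroup (each element has a unique inverse),
natural conjugacy coincides with i-conjugacy. -/
theorem natConj_iff_iConj {S : Type*} [Semigroup S] [Inv S]
    (hinv1 : ∀ a : S, a * a⁻¹ * a = a)
    (hinv2 : ∀ a : S, a⁻¹ * a * a⁻¹ = a⁻¹)
    (huniq : ∀ a b : S, a * b * a = a → b * a * b = b → b = a⁻¹)
    (a b : S) :
    NatConj a b ↔
      ∃ g : WithOne S,
        winv g * (a : WithOne S) * g = (b : WithOne S) ∧
        g * (b : WithOne S) * winv g = (a : WithOne S) := by
  -- basic facts about `winv` on `S¹`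
  have winv_one : winv (1 : WithOne S) = 1 := by simp [winv]
  have winv_coe : ∀ s : S, winv (s : WithOne S) = ((s⁻¹ : S) : WithOne S) := by
    intro s
    rw [winv, dif_neg WithOne.coe_ne_one, WithOne.unone_coe]
  have m1 : ∀ x : WithOne S, x * winv x * x = x := by
    intro x
    induction x with
    | one => rw [winv_one]; simp
    | coe s => rw [winv_coe, ← WithOne.coe_mul, ← WithOne.coe_mul, hinv1]
  have m2 : ∀ x : WithOne S, winv x * x * winv x = winv x := by
    intro x
    induction x with
    | one => rw [winv_one]; simp
    | coe s => rw [winv_coe, ← WithOne.coe_mul, ← WithOne.coe_mul, hinv2]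
  have mu : ∀ x y : WithOne S, x * y * x = x → y * x * y = y → y = winv x := by
    intro x y
    induction x with
    | one =>
      intro h1 _
      rw [one_mul, mul_one] at h1
      rw [h1, winv_one]
    | coe s =>
      induction y with
      | one =>
        intro _ h2
        rw [one_mul, mul_one] at h2
        exact absurd h2 WithOne.coe_ne_one
      | coe t =>
        intro h1 h2
        rw [winv_coe]
        rw [← WithOne.coe_mul, ← WithOne.coe_mul] at h1 h2
        rw [WithOne.coe_inj] at h1 h2 ⊢
        exact huniq s t h1 h2
  have m1r : ∀ x : WithOne S, x * (winv x * x) = x := by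
    intro x; rw [← mul_assoc]; exact m1 x
  have m2r : ∀ x : WithOne S, winv x * (x * winv x) = winv x := by
    intro x; rw [← mul_assoc]; exact m2 x
  set A : WithOne S := (a : WithOne S) with hA
  set B : WithOne S := (b : WithOne S) with hB
  constructor
  · -- natural conjugacy implies i-conjugacy
    rintro ⟨G, H, r1, r2, r3, r4⟩
    refine ⟨G, ?_, ?_⟩
    · -- winv G * A * G = B
      have hb : H * G * B = B := by
        rw [mul_assoc, ← r1, ← mul_assoc, r3]
      have ha : A * G * H = A := by
        rw [r1, r4]
      have hK : B * winv B * (B * winv B) = B * winv B := by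
        rw [← mul_assoc, m1]
      have hvk : H * G * (B * winv B) = B * winv B := by
        rw [← mul_assoc, hb]
      have hkv : B * winv B * (H * G) = B * winv B :=
        ConjAux.absorb_right winv m1 m2 mu (H * G) (B * winv B) hK hvk
      have hGG : winv G * G * (winv G * G) = winv G * G := by
        calc winv G * G * (winv G * G) = winv G * (G * winv G * G) := by
              simp only [mul_assoc]
          _ = winv G * G := by rw [m1]
      have hkg : B * winv B * (winv G * G) = B * winv B := by
        calc B * winv B * (winv G * G)
            = B * winv B * (H * G) * (winv G * G) := by rw [hkv]
          _ = B * winv B * (H * (G * (winv G * G))) := by simp only [mul_assoc]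
          _ = B * winv B * (H * G) := by rw [m1r G]
          _ = B * winv B := hkv
      have hgk : winv G * G * (B * winv B) = B * winv B :=
        (ConjAux.idem_comm winv m1 m2 mu _ _ hGG hK).trans hkg
      have hgb : winv G * G * B = B := by
        calc winv G * G * B
            = winv G * G * (B * winv B * B) := by rw [m1]
          _ = winv G * G * (B * winv B) * B := by simp only [mul_assoc]
          _ = B * winv B * B := by rw [hgk]
          _ = B := m1 B
      calc winv G * A * G = winv G * (A * G) := by rw [mul_assoc]
        _ = winv G * (G * B) := by rw [r1]
        _ = winv G * G * B := by rw [mul_assoc]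
        _ = B := hgb
    · -- G * B * winv G = A
      have ha : A * G * H = A := by rw [r1, r4]
      have hJ : winv A * A * (winv A * A) = winv A * A := by
        calc winv A * A * (winv A * A) = winv A * (A * winv A * A) := by
              simp only [mul_assoc]
          _ = winv A * A := by rw [m1]
      have hjw : winv A * A * (G * H) = winv A * A := by
        calc winv A * A * (G * H) = winv A * (A * G * H) := by
              simp only [mul_assoc]
          _ = winv A * A := by rw [ha]
      have hwj : G * H * (winv A * A) = winv A * A :=
        ConjAux.absorb_left winv m1 m2 mu (G * H) (winv A * A) hJ hjw
      have hgg : G * winv G * (G * winv G) = G * winv G := by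
        calc G * winv G * (G * winv G) = G * winv G * G * winv G := by
              simp only [mul_assoc]
          _ = G * winv G := by rw [m1]
      have hgj : G * winv G * (winv A * A) = winv A * A := by
        calc G * winv G * (winv A * A)
            = G * winv G * (G * H * (winv A * A)) := by rw [hwj]
          _ = G * winv G * G * (H * (winv A * A)) := by simp only [mul_assoc]
          _ = G * (H * (winv A * A)) := by rw [m1]
          _ = G * H * (winv A * A) := by rw [mul_assoc]
          _ = winv A * A := hwj
      have hjg : winv A * A * (G * winv G) = winv A * A :=
        (ConjAux.idem_comm winv m1 m2 mu _ _ hJ hgg).trans hgj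
      have haj : A * (G * winv G) = A := by
        calc A * (G * winv G) = A * (winv A * A) * (G * winv G) := by rw [m1r]
          _ = A * (winv A * A * (G * winv G)) := by simp only [mul_assoc]
          _ = A * (winv A * A) := by rw [hjg]
          _ = A := m1r A
      calc G * B * winv G = A * G * winv G := by rw [← r1]
        _ = A * (G * winv G) := by rw [mul_assoc]
        _ = A := haj
  · -- i-conjugacy implies natural conjugacy
    rintro ⟨g, h1, h2⟩
    have hbg : B * (winv g * g) = B := by
      calc B * (winv g * g) = winv g * A * g * (winv g * g) := by rw [h1]
        _ = winv g * (A * (g * (winv g * g))) := by simp only [mul_assoc]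
        _ = winv g * (A * g) := by rw [m1r g]
        _ = winv g * A * g := by rw [mul_assoc]
        _ = B := h1
    have hag : A * (g * winv g) = A := by
      calc A * (g * winv g) = g * B * winv g * (g * winv g) := by rw [h2]
        _ = g * (B * (winv g * (g * winv g))) := by simp only [mul_assoc]
        _ = g * (B * winv g) := by rw [m2r g]
        _ = g * B * winv g := by rw [mul_assoc]
        _ = A := h2
    refine ⟨g, winv g, ?_, ?_, h1, h2⟩
    · calc A * g = g * B * winv g * g := by rw [h2]
        _ = g * (B * (winv g * g)) := by simp only [mul_assoc]
        _ = g * B := by rw [hbg]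
    · calc B * winv g = winv g * A * g * winv g := by rw [h1]
        _ = winv g * (A * (g * winv g)) := by simp only [mul_assoc]
        _ = winv g * A := by rw [hag]
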